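/- (Per-iteration bound in the convex case.) Let d be a positive integer, η > 0, G ≥ 0, L > 0. Let f : ℝ^d → ℝ be convex, differentiable with L-Lipschitz gradient, and let x* ∈ ℝ^d. Let (Ω, ℱ, ℙ) be a probability space with a sub-σ-algebra ℱ_t, let x, e be ℱ_t-measurable square-integrable ℝ^d-valued random vectors, and g a square-integrable ℝ^d-valued random vector with E[g | ℱ_t] = ∇f(x) a.s. and E[‖g − ∇f(x)‖₂²] ≤ G². Set x̃ = x − e and x̃⁺ = x̃ − η g. Then E[⟨∇f(x), x − x*⟩] ≤ (1/(2η))·(E[‖x̃ − x*‖₂²] − E[‖x̃⁺ − x*‖₂²]) + (η G²)/2 + ((η + 1/(3L))/2)·E[‖∇f(x)‖₂²] + (3L/2)·E[‖e‖₂²]. -/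

import Mathlib

open MeasureTheory

lemma integrableInner_of_memL2 {α E : Type*} {mα : MeasurableSpace α} {μ : Measure α}
    [NormedAddCommGroup E] [InnerProductSpace ℝ E] {a b : α → E}
    (ha : MemLp a 2 μ) (hb : MemLp b 2 μ) :
    Integrable (fun ω => (inner ℝ (a ω) (b ω) : ℝ)) μ := by
  have h := L2.integrable_inner (𝕜 := ℝ) (ha.toLp a) (hb.toLp b)
  refine h.congr ?_
  filter_upwards [ha.coeFn_toLp, hb.coeFn_toLp] with ω h1 h2
  rw [h1, h2]

lemma sq_norm_integrable_of_memL2 {α E : Type*} {mα : MeasurableSpace α} {μ : Measure α}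
    [NormedAddCommGroup E] {a : α → E} (ha : MemLp a 2 μ) :
    Integrable (fun ω => ‖a ω‖ ^ 2) μ :=
  (memLp_two_iff_integrable_sq_norm ha.aestronglyMeasurable).1 ha

lemma coord_condexp_eq {d : ℕ} {Ω : Type*} (ℱt : MeasurableSpace Ω)
    {m : MeasurableSpace Ω} {P : Measure Ω}
    [IsProbabilityMeasure P] (hℱt : ℱt ≤ m)
    (g G0 : Ω → EuclideanSpace ℝ (Fin d))
    (hG0m : StronglyMeasurable[ℱt] G0) (hG0L2 : MemLp G0 2 P)
    (hgL2 : MemLp g 2 P) (hcond : P[g|ℱt] =ᵐ[P] G0) (i : Fin d) :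
    P[fun ω => g ω i|ℱt] =ᵐ[P] fun ω => G0 ω i := by
  haveI : SigmaFinite (P.trim hℱt) := by
    have : IsFiniteMeasure (P.trim hℱt) := isFiniteMeasure_trim hℱt
    infer_instance
  have hgint : Integrable g P := hgL2.integrable one_le_two
  have hgi_int : Integrable (fun ω => g ω i) P :=
    ((EuclideanSpace.proj i : EuclideanSpace ℝ (Fin d) →L[ℝ] ℝ).comp_memLp' hgL2).integrable
      one_le_two
  refine (ae_eq_condExp_of_forall_setIntegral_eq hℱt hgi_int ?_ ?_ ?_).symm
  · exact fun s _ _ =>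
      (((EuclideanSpace.proj i :
        EuclideanSpace ℝ (Fin d) →L[ℝ] ℝ).comp_memLp' hG0L2).integrable one_le_two).restrict
  · intro s hs _
    have h1 : ∫ ω in s, G0 ω i ∂P = ∫ ω in s, (P[g|ℱt]) ω i ∂P := by
      refine integral_congr_ae (ae_restrict_of_ae (hcond.mono fun ω hω => ?_))
      show G0 ω i = (P[g|ℱt]) ω i
      rw [hω]
    have e1 := (EuclideanSpace.proj i : EuclideanSpace ℝ (Fin d) →L[ℝ] ℝ).integral_comp_comm
      (μ := P.restrict s) ((integrable_condExp (m := ℱt) (f := g) (μ := P)).restrict)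
    have e2 := (EuclideanSpace.proj i : EuclideanSpace ℝ (Fin d) →L[ℝ] ℝ).integral_comp_comm
      (μ := P.restrict s) hgint.restrict
    have h2 : ∫ ω in s, (P[g|ℱt]) ω i ∂P = ∫ ω in s, g ω i ∂P := by
      show ∫ ω in s, (EuclideanSpace.proj i : EuclideanSpace ℝ (Fin d) →L[ℝ] ℝ) ((P[g|ℱt]) ω) ∂P
        = ∫ ω in s, (EuclideanSpace.proj i : EuclideanSpace ℝ (Fin d) →L[ℝ] ℝ) (g ω) ∂P
      rw [e1, e2, setIntegral_condExp hℱt hgint hs]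
    rw [h1, h2]
  · exact StronglyMeasurable.aestronglyMeasurable
      ((EuclideanSpace.proj i :
        EuclideanSpace ℝ (Fin d) →L[ℝ] ℝ).continuous.comp_stronglyMeasurable hG0m)

lemma key_integral_eq {d : ℕ} {Ω : Type*} (ℱt : MeasurableSpace Ω)
    {m : MeasurableSpace Ω} {P : Measure Ω}
    [IsProbabilityMeasure P] (hℱt : ℱt ≤ m)
    (g G0 y : Ω → EuclideanSpace ℝ (Fin d))
    (hG0m : StronglyMeasurable[ℱt] G0) (hG0L2 : MemLp G0 2 P)
    (hgL2 : MemLp g 2 P) (hcond : P[g|ℱt] =ᵐ[P] G0)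
    (hym : StronglyMeasurable[ℱt] y) (hyL2 : MemLp y 2 P) :
    ∫ ω, (inner ℝ (y ω) (g ω) : ℝ) ∂P = ∫ ω, (inner ℝ (y ω) (G0 ω) : ℝ) ∂P := by
  haveI : SigmaFinite (P.trim hℱt) := by
    have : IsFiniteMeasure (P.trim hℱt) := isFiniteMeasure_trim hℱt
    infer_instance
  have hprojL2 : ∀ (h : Ω → EuclideanSpace ℝ (Fin d)), MemLp h 2 P →
      ∀ i : Fin d, MemLp (fun ω => h ω i) 2 P := fun h hh i =>
    (EuclideanSpace.proj i : EuclideanSpace ℝ (Fin d) →L[ℝ] ℝ).comp_memLp' hh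
  have hci := coord_condexp_eq ℱt hℱt g G0 hG0m hG0L2 hgL2 hcond
  have hint1 : ∀ i : Fin d, Integrable (fun ω => y ω i * g ω i) P := by
    intro i
    have := integrableInner_of_memL2 (E := ℝ) (hprojL2 y hyL2 i) (hprojL2 g hgL2 i)
    simpa [RCLike.inner_apply, conj_trivial, mul_comm] using this
  have hint2 : ∀ i : Fin d, Integrable (fun ω => y ω i * G0 ω i) P := by
    intro i
    have := integrableInner_of_memL2 (E := ℝ) (hprojL2 y hyL2 i) (hprojL2 G0 hG0L2 i)
    simpa [RCLike.inner_apply, conj_trivial, mul_comm] using this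
  have hprod : ∀ i : Fin d, ∫ ω, y ω i * g ω i ∂P = ∫ ω, y ω i * G0 ω i ∂P := by
    intro i
    have hyi : StronglyMeasurable[ℱt] (fun ω => y ω i) :=
      (EuclideanSpace.proj i :
        EuclideanSpace ℝ (Fin d) →L[ℝ] ℝ).continuous.comp_stronglyMeasurable hym
    have hgi_int : Integrable (fun ω => g ω i) P := (hprojL2 g hgL2 i).integrable one_le_two
    have hpull := condExp_mul_of_stronglyMeasurable_left (μ := P) (m := ℱt) hyi
      (by exact hint1 i) hgi_int
    calc ∫ ω, y ω i * g ω i ∂P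
        = ∫ ω, (P[(fun ω => y ω i) * (fun ω => g ω i)|ℱt]) ω ∂P := by
          rw [integral_condExp hℱt]; rfl
      _ = ∫ ω, y ω i * (P[fun ω => g ω i|ℱt]) ω ∂P := by
          refine integral_congr_ae (hpull.mono fun ω hω => ?_)
          simpa using hω
      _ = ∫ ω, y ω i * G0 ω i ∂P := by
          refine integral_congr_ae ((hci i).mono fun ω hω => ?_)
          show y ω i * (P[fun ω => g ω i|ℱt]) ω = y ω i * G0 ω i
          rw [hω]
  have hinner : ∀ (a b : EuclideanSpace ℝ (Fin d)),
      (inner ℝ a b : ℝ) = ∑ i, a i * b i := by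
    intro a b
    simp [PiLp.inner_apply, RCLike.inner_apply, conj_trivial, mul_comm]
  calc ∫ ω, (inner ℝ (y ω) (g ω) : ℝ) ∂P
      = ∫ ω, ∑ i, y ω i * g ω i ∂P := by simp_rw [hinner]
    _ = ∑ i, ∫ ω, y ω i * g ω i ∂P := integral_finset_sum _ (fun i _ => hint1 i)
    _ = ∑ i, ∫ ω, y ω i * G0 ω i ∂P := by simp_rw [hprod]
    _ = ∫ ω, ∑ i, y ω i * G0 ω i ∂P := (integral_finset_sum _ (fun i _ => hint2 i)).symm
    _ = ∫ ω, (inner ℝ (y ω) (G0 ω) : ℝ) ∂P := by simp_rw [hinner]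


theorem stmt15 (d : ℕ) (hd : 0 < d)
    (η G L : ℝ) (hη : 0 < η) (hG : 0 ≤ G) (hL : 0 < L)
    (f : EuclideanSpace ℝ (Fin d) → ℝ) (hconv : ConvexOn ℝ Set.univ f)
    (hf : Differentiable ℝ f)
    (hlip : ∀ a b : EuclideanSpace ℝ (Fin d),
      ‖gradient f a - gradient f b‖ ≤ L * ‖a - b‖)
    (xstar : EuclideanSpace ℝ (Fin d))
    {Ω : Type*} {m : MeasurableSpace Ω} (P : Measure Ω) [IsProbabilityMeasure P]
    (ℱt : MeasurableSpace Ω) (hℱt : ℱt ≤ m)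
    (x e g : Ω → EuclideanSpace ℝ (Fin d))
    (hx : StronglyMeasurable[ℱt] x) (he : StronglyMeasurable[ℱt] e)
    (hxL2 : MemLp x 2 P) (heL2 : MemLp e 2 P) (hgL2 : MemLp g 2 P)
    (hcond : P[g|ℱt] =ᵐ[P] fun ω => gradient f (x ω))
    (hvar : ∫ ω, ‖g ω - gradient f (x ω)‖ ^ 2 ∂P ≤ G ^ 2) :
    ∫ ω, (inner ℝ (gradient f (x ω)) (x ω - xstar) : ℝ) ∂P ≤
      1 / (2 * η) * ((∫ ω, ‖x ω - e ω - xstar‖ ^ 2 ∂P)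
          - ∫ ω, ‖x ω - e ω - η • g ω - xstar‖ ^ 2 ∂P)
      + η * G ^ 2 / 2
      + (η + 1 / (3 * L)) / 2 * ∫ ω, ‖gradient f (x ω)‖ ^ 2 ∂P
      + 3 * L / 2 * ∫ ω, ‖e ω‖ ^ 2 ∂P := by
  have hLne : L ≠ 0 := ne_of_gt hL
  have hηne : η ≠ 0 := ne_of_gt hη
  -- gradient continuity and measurability
  have hlipc : Continuous (gradient f) := by
    have : LipschitzWith (Real.toNNReal L) (gradient f) :=
      LipschitzWith.of_dist_le_mul (fun a b => by
        simpa [dist_eq_norm, Real.coe_toNNReal L hL.le] using hlip a b)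
    exact this.continuous
  have hG0m : StronglyMeasurable[ℱt] (fun ω => gradient f (x ω)) :=
    hlipc.comp_stronglyMeasurable hx
  have hG0L2 : MemLp (fun ω => gradient f (x ω)) 2 P := by
    refine MemLp.of_le ((hxL2.norm.const_mul L).add (memLp_const ‖gradient f 0‖))
      ((hG0m.mono hℱt).aestronglyMeasurable) (Filter.Eventually.of_forall fun ω => ?_)
    have h1 : ‖gradient f (x ω) - gradient f 0‖ ≤ L * ‖x ω - 0‖ := hlip _ _
    rw [sub_zero] at h1
    have h2 := norm_sub_norm_le (gradient f (x ω)) (gradient f 0)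
    have h3 := le_abs_self (L * ‖x ω‖ + ‖gradient f 0‖)
    simp only [Pi.add_apply, Real.norm_eq_abs]
    linarith
  -- L2 membership of relevant variables
  have hytL2 : MemLp (fun ω => x ω - e ω - xstar) 2 P :=
    (hxL2.sub heL2).sub (memLp_const _)
  have hyt_m : StronglyMeasurable[ℱt] (fun ω => x ω - e ω - xstar) :=
    (hx.sub he).sub stronglyMeasurable_const
  have hxtpL2 : MemLp (fun ω => x ω - e ω - η • g ω - xstar) 2 P :=
    ((hxL2.sub heL2).sub (hgL2.const_smul η)).sub (memLp_const _)
  have hxsL2 : MemLp (fun ω => x ω - xstar) 2 P := hxL2.sub (memLp_const _)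
  -- integrability of squared norms
  have iA : Integrable (fun ω => ‖x ω - e ω - xstar‖ ^ 2) P :=
    sq_norm_integrable_of_memL2 hytL2
  have iB : Integrable (fun ω => ‖x ω - e ω - η • g ω - xstar‖ ^ 2) P :=
    sq_norm_integrable_of_memL2 hxtpL2
  have iSg : Integrable (fun ω => ‖g ω‖ ^ 2) P := sq_norm_integrable_of_memL2 hgL2
  have iS : Integrable (fun ω => ‖gradient f (x ω)‖ ^ 2) P := sq_norm_integrable_of_memL2 hG0L2
  have iSe : Integrable (fun ω => ‖e ω‖ ^ 2) P := sq_norm_integrable_of_memL2 heL2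
  -- integrability of inner products
  have iIg : Integrable (fun ω => (inner ℝ (x ω - e ω - xstar) (g ω) : ℝ)) P :=
    integrableInner_of_memL2 hytL2 hgL2
  have iIG : Integrable (fun ω => (inner ℝ (x ω - e ω - xstar) (gradient f (x ω)) : ℝ)) P :=
    integrableInner_of_memL2 hytL2 hG0L2
  have iT : Integrable (fun ω => (inner ℝ (x ω - xstar) (gradient f (x ω)) : ℝ)) P :=
    integrableInner_of_memL2 hxsL2 hG0L2
  have iI2 : Integrable (fun ω => (inner ℝ (e ω) (gradient f (x ω)) : ℝ)) P :=
    integrableInner_of_memL2 heL2 hG0L2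
  have iGg : Integrable (fun ω => (inner ℝ (gradient f (x ω)) (g ω) : ℝ)) P :=
    integrableInner_of_memL2 hG0L2 hgL2
  -- key conditional-expectation identities
  have k1 : ∫ ω, (inner ℝ (x ω - e ω - xstar) (g ω) : ℝ) ∂P
      = ∫ ω, (inner ℝ (x ω - e ω - xstar) (gradient f (x ω)) : ℝ) ∂P :=
    key_integral_eq ℱt hℱt g _ _ hG0m hG0L2 hgL2 hcond hyt_m hytL2
  have k2 : ∫ ω, (inner ℝ (gradient f (x ω)) (g ω) : ℝ) ∂P
      = ∫ ω, (inner ℝ (gradient f (x ω)) (gradient f (x ω)) : ℝ) ∂P :=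
    key_integral_eq ℱt hℱt g _ _ hG0m hG0L2 hgL2 hcond hG0m hG0L2
  have k2' : ∫ ω, (inner ℝ (gradient f (x ω)) (g ω) : ℝ) ∂P
      = ∫ ω, ‖gradient f (x ω)‖ ^ 2 ∂P := by
    rw [k2]
    exact integral_congr_ae (Filter.Eventually.of_forall fun ω =>
      real_inner_self_eq_norm_sq _)
  -- expansion of ‖x̃⁺ - x*‖²
  have hB : ∫ ω, ‖x ω - e ω - η • g ω - xstar‖ ^ 2 ∂P
      = ∫ ω, ‖x ω - e ω - xstar‖ ^ 2 ∂P
        - 2 * η * ∫ ω, (inner ℝ (x ω - e ω - xstar) (g ω) : ℝ) ∂P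
        + η ^ 2 * ∫ ω, ‖g ω‖ ^ 2 ∂P := by
    have hpt : ∀ ω, ‖x ω - e ω - η • g ω - xstar‖ ^ 2
        = ‖x ω - e ω - xstar‖ ^ 2
          - 2 * η * (inner ℝ (x ω - e ω - xstar) (g ω) : ℝ) + η ^ 2 * ‖g ω‖ ^ 2 := by
      intro ω
      have h0 : x ω - e ω - η • g ω - xstar = (x ω - e ω - xstar) - η • g ω := by abel
      rw [h0, norm_sub_sq_real, real_inner_smul_right, norm_smul, Real.norm_eq_abs,
        mul_pow, sq_abs]
      ring
    have i3 : Integrable (fun ω => 2 * η * (inner ℝ (x ω - e ω - xstar) (g ω) : ℝ)) P :=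
      iIg.const_mul _
    have i1 : Integrable (fun ω => ‖x ω - e ω - xstar‖ ^ 2
        - 2 * η * (inner ℝ (x ω - e ω - xstar) (g ω) : ℝ)) P := iA.sub i3
    have i2 : Integrable (fun ω => η ^ 2 * ‖g ω‖ ^ 2) P := iSg.const_mul _
    rw [integral_congr_ae (Filter.Eventually.of_forall hpt),
      integral_add i1 i2, integral_sub iA i3, integral_const_mul, integral_const_mul]
  -- variance identity : ∫‖g-∇‖² = ∫‖g‖² - ∫‖∇‖²
  have hV : ∫ ω, ‖g ω - gradient f (x ω)‖ ^ 2 ∂P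
      = ∫ ω, ‖g ω‖ ^ 2 ∂P - ∫ ω, ‖gradient f (x ω)‖ ^ 2 ∂P := by
    have hpt : ∀ ω, ‖g ω - gradient f (x ω)‖ ^ 2
        = ‖g ω‖ ^ 2 - 2 * (inner ℝ (gradient f (x ω)) (g ω) : ℝ)
          + ‖gradient f (x ω)‖ ^ 2 := by
      intro ω
      rw [norm_sub_sq_real, real_inner_comm]
    have i5 : Integrable (fun ω => 2 * (inner ℝ (gradient f (x ω)) (g ω) : ℝ)) P :=
      iGg.const_mul _
    have i4 : Integrable (fun ω => ‖g ω‖ ^ 2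
        - 2 * (inner ℝ (gradient f (x ω)) (g ω) : ℝ)) P := iSg.sub i5
    rw [integral_congr_ae (Filter.Eventually.of_forall hpt),
      integral_add i4 iS, integral_sub iSg i5, integral_const_mul, k2']
    ring
  -- split the inner product
  have hsplit : ∫ ω, (inner ℝ (x ω - e ω - xstar) (gradient f (x ω)) : ℝ) ∂P
      = ∫ ω, (inner ℝ (x ω - xstar) (gradient f (x ω)) : ℝ) ∂P
        - ∫ ω, (inner ℝ (e ω) (gradient f (x ω)) : ℝ) ∂P := by
    have hpt : ∀ ω, (inner ℝ (x ω - e ω - xstar) (gradient f (x ω)) : ℝ)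
        = (inner ℝ (x ω - xstar) (gradient f (x ω)) : ℝ)
          - (inner ℝ (e ω) (gradient f (x ω)) : ℝ) := by
      intro ω
      rw [show x ω - e ω - xstar = (x ω - xstar) - e ω by abel, inner_sub_left]
    rw [integral_congr_ae (Filter.Eventually.of_forall hpt), integral_sub iT iI2]
  -- bound on ∫⟨e, ∇f(x)⟩
  have hI2 : ∫ ω, (inner ℝ (e ω) (gradient f (x ω)) : ℝ) ∂P
      ≤ 1 / (6 * L) * ∫ ω, ‖gradient f (x ω)‖ ^ 2 ∂P
        + 3 * L / 2 * ∫ ω, ‖e ω‖ ^ 2 ∂P := by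
    have hpt : ∀ ω, (inner ℝ (e ω) (gradient f (x ω)) : ℝ)
        ≤ 1 / (6 * L) * ‖gradient f (x ω)‖ ^ 2 + 3 * L / 2 * ‖e ω‖ ^ 2 := by
      intro ω
      have h1 := real_inner_le_norm (e ω) (gradient f (x ω))
      have key : ‖e ω‖ * ‖gradient f (x ω)‖
          ≤ 1 / (6 * L) * ‖gradient f (x ω)‖ ^ 2 + 3 * L / 2 * ‖e ω‖ ^ 2 := by
        rw [← sub_nonneg]
        have heq : 1 / (6 * L) * ‖gradient f (x ω)‖ ^ 2 + 3 * L / 2 * ‖e ω‖ ^ 2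
            - ‖e ω‖ * ‖gradient f (x ω)‖
            = 1 / (6 * L) * (‖gradient f (x ω)‖ - 3 * L * ‖e ω‖) ^ 2 := by
          field_simp
          ring
        rw [heq]
        positivity
      linarith
    have hrhs : ∫ ω, (1 / (6 * L) * ‖gradient f (x ω)‖ ^ 2 + 3 * L / 2 * ‖e ω‖ ^ 2) ∂P
        = 1 / (6 * L) * ∫ ω, ‖gradient f (x ω)‖ ^ 2 ∂P
          + 3 * L / 2 * ∫ ω, ‖e ω‖ ^ 2 ∂P := by
      have i6 : Integrable (fun ω => 1 / (6 * L) * ‖gradient f (x ω)‖ ^ 2) P :=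
        iS.const_mul _
      have i7 : Integrable (fun ω => 3 * L / 2 * ‖e ω‖ ^ 2) P := iSe.const_mul _
      rw [integral_add i6 i7, integral_const_mul, integral_const_mul]
    calc ∫ ω, (inner ℝ (e ω) (gradient f (x ω)) : ℝ) ∂P
        ≤ ∫ ω, (1 / (6 * L) * ‖gradient f (x ω)‖ ^ 2 + 3 * L / 2 * ‖e ω‖ ^ 2) ∂P :=
          integral_mono iI2 (((iS.const_mul _ : Integrable (fun ω => 1 / (6 * L) * ‖gradient f (x ω)‖ ^ 2) P)).add
            (iSe.const_mul _ : Integrable (fun ω => 3 * L / 2 * ‖e ω‖ ^ 2) P)) hpt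
      _ = _ := hrhs
  -- flip the goal's inner product
  have hTgoal : ∫ ω, (inner ℝ (gradient f (x ω)) (x ω - xstar) : ℝ) ∂P
      = ∫ ω, (inner ℝ (x ω - xstar) (gradient f (x ω)) : ℝ) ∂P :=
    integral_congr_ae (Filter.Eventually.of_forall fun ω => real_inner_comm _ _)
  rw [hTgoal]
  -- final arithmetic
  have e1 : 1 / (2 * η) * ((∫ ω, ‖x ω - e ω - xstar‖ ^ 2 ∂P)
        - ∫ ω, ‖x ω - e ω - η • g ω - xstar‖ ^ 2 ∂P)
      = (∫ ω, (inner ℝ (x ω - e ω - xstar) (g ω) : ℝ) ∂P)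
        - η / 2 * ∫ ω, ‖g ω‖ ^ 2 ∂P := by
    rw [hB]
    field_simp
    ring
  have hSg : ∫ ω, ‖g ω‖ ^ 2 ∂P
      = (∫ ω, ‖g ω - gradient f (x ω)‖ ^ 2 ∂P) + ∫ ω, ‖gradient f (x ω)‖ ^ 2 ∂P := by
    linarith [hV]
  have h2 : η / 2 * ∫ ω, ‖g ω‖ ^ 2 ∂P
      ≤ η * G ^ 2 / 2 + η / 2 * ∫ ω, ‖gradient f (x ω)‖ ^ 2 ∂P := by
    rw [hSg]
    nlinarith [mul_le_mul_of_nonneg_left hvar (le_of_lt (half_pos hη))]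
  have hcoefS : (η + 1 / (3 * L)) / 2 * ∫ ω, ‖gradient f (x ω)‖ ^ 2 ∂P
      = η / 2 * ∫ ω, ‖gradient f (x ω)‖ ^ 2 ∂P
        + 1 / (6 * L) * ∫ ω, ‖gradient f (x ω)‖ ^ 2 ∂P := by
    field_simp
    ring
  linarith [e1, k1, hsplit, h2, hI2, hcoefS]
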